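/- Let G be a group that is nilpotent of class at most 3 (i.e. every triple commutator ⁅⁅x,y⁆,z⁆ lies in the center Z(G)), and let a ∈ G satisfy (a·x)^3 = a^3·x^3 for all x ∈ G (i.e. a lies in the commutant C(°G)). Then a∘(x∘y) = (a∘x)∘y for all x,y ∈ G if and only if (x∘y)∘a = x∘(y∘a) for all x,y ∈ G, where x∘y = y⁻¹xy². (Hence the center Z(°G) of the associated gyrogroup equals C(°G) ∩ N_i(°G) for each of the left, middle and right nuclei.) -/

import Mathlib

open scoped commutatorElement

/-- The gyrogroup operation associated with a group: `x ∘ y = y⁻¹ * x * y²`. -/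
def gyrOp {G : Type*} [Group G] (x y : G) : G := y⁻¹ * x * y ^ 2

section Helpers

variable {G : Type*} [Group G]

private lemma conj_eq_one_iff' {c w : G} : c * w * c⁻¹ = 1 ↔ w = 1 := by
  rw [mul_inv_eq_one, mul_eq_left]

private lemma EL_diff (a x y : G) :
    gyrOp a (gyrOp x y) * (gyrOp (gyrOp a x) y)⁻¹
      = (y⁻¹ * y⁻¹ * x⁻¹ * y) * ⁅a, ⁅y⁻¹, x⁆⁆ * (y⁻¹ * y⁻¹ * x⁻¹ * y)⁻¹ := by
  simp only [gyrOp, commutatorElement_def, sq]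
  group

private lemma ER_diff (a x y : G) :
    gyrOp (gyrOp x y) a * (gyrOp x (gyrOp y a))⁻¹
      = (a⁻¹ * y⁻¹) * ⁅x, ⁅y, a⁻¹⁆⁆ * (a⁻¹ * y⁻¹)⁻¹ := by
  simp only [gyrOp, commutatorElement_def, sq]
  group
  rw [show (2 : ℤ) = 1 + 1 by norm_num, zpow_add, zpow_one]
  group

private lemma EL_iff (a x y : G) :
    gyrOp a (gyrOp x y) = gyrOp (gyrOp a x) y ↔ ⁅a, ⁅y⁻¹, x⁆⁆ = 1 := by
  rw [← mul_inv_eq_one, EL_diff, conj_eq_one_iff']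

private lemma ER_iff (a x y : G) :
    gyrOp (gyrOp x y) a = gyrOp x (gyrOp y a) ↔ ⁅x, ⁅y, a⁻¹⁆⁆ = 1 := by
  rw [← mul_inv_eq_one, ER_diff, conj_eq_one_iff']

private lemma pow3 (g : G) : g ^ 3 = g * g * g := by
  rw [pow_succ, pow_succ, pow_one]

private lemma comm_mul_right' (g u v : G) : ⁅g, u * v⁆ = ⁅g, u⁆ * (u * ⁅g, v⁆ * u⁻¹) := by
  simp only [commutatorElement_def]; group

private lemma comm_mul_left' (g u v : G) : ⁅u * v, g⁆ = (u * ⁅v, g⁆ * u⁻¹) * ⁅u, g⁆ := by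
  simp only [commutatorElement_def]; group

private lemma conj_comm' (u k : G) : u * k * u⁻¹ = ⁅u, k⁆ * k := by
  simp only [commutatorElement_def]; group

private lemma comm_mul_right_c (g u v : G) (h : ∀ t, Commute ⁅g, v⁆ t) :
    ⁅g, u * v⁆ = ⁅g, u⁆ * ⁅g, v⁆ := by
  rw [comm_mul_right' g u v, ← (h u).eq, mul_inv_cancel_right]

private lemma comm_mul_left_c (g u v : G) (h : ∀ t, Commute ⁅v, g⁆ t) :
    ⁅u * v, g⁆ = ⁅v, g⁆ * ⁅u, g⁆ := by
  rw [comm_mul_left' g u v, ← (h u).eq, mul_inv_cancel_right]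

private lemma comm_inv_right_c (g v : G) (h : ∀ t, Commute ⁅g, v⁆ t) :
    ⁅g, v⁻¹⁆ = ⁅g, v⁆⁻¹ := by
  have h1 : ⁅g, v⁻¹⁆ = v⁻¹ * ⁅g, v⁆⁻¹ * v := by
    simp only [commutatorElement_def]; group
  rw [h1, ← ((h v).inv_left.inv_right).eq, inv_mul_cancel_right]

private lemma comm_absorb (g z m : G) (h : ∀ t, Commute z t) : ⁅g, z * m⁆ = ⁅g, m⁆ := by
  have h1 : ⁅g, z * m⁆ = g * z * m * g⁻¹ * m⁻¹ * z⁻¹ := by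
    simp only [commutatorElement_def]; group
  rw [h1, ← (h g).eq]
  have h2 : z * g * m * g⁻¹ * m⁻¹ * z⁻¹ = z * ⁅g, m⁆ * z⁻¹ := by
    simp only [commutatorElement_def]; group
  rw [h2, (h ⁅g, m⁆).eq, mul_inv_cancel_right]

end Helpers


theorem commutant_left_nucleus_iff_right_nucleus {G : Type*} [Group G]
    (h3 : ∀ x y z : G, ⁅⁅x, y⁆, z⁆ ∈ Subgroup.center G) (a : G)
    (ha : ∀ x : G, (a * x) ^ 3 = a ^ 3 * x ^ 3) :
    (∀ x y : G, gyrOp a (gyrOp x y) = gyrOp (gyrOp a x) y) ↔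
      (∀ x y : G, gyrOp (gyrOp x y) a = gyrOp x (gyrOp y a)) := by
  -- triple commutators commute with everything
  have zc : ∀ u v w g : G, Commute ⁅⁅u, v⁆, w⁆ g := fun u v w g =>
    (Subgroup.mem_center_iff.mp (h3 u v w) g).symm
  have zc' : ∀ s u v g : G, Commute ⁅s, ⁅u, v⁆⁆ g := fun s u v g => by
    rw [← commutatorElement_inv]
    exact (zc u v s g).inv_left
  -- γ₃ ≤ Z(G) as subgroups
  have hZ3 : ⁅(⁅(⊤ : Subgroup G), (⊤ : Subgroup G)⁆ : Subgroup G), (⊤ : Subgroup G)⁆ ≤ Subgroup.center G := by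
    refine Subgroup.commutator_le.mpr ?_
    intro k hk g _
    revert g
    rw [Subgroup.commutator_def] at hk
    induction hk using Subgroup.closure_induction with
    | mem k hk =>
      obtain ⟨u, -, v, -, rfl⟩ := hk
      exact fun g _ => h3 u v g
    | one =>
      intro g _
      have e : ⁅(1 : G), g⁆ = 1 := by simp only [commutatorElement_def]; group
      rw [e]; exact Subgroup.one_mem _
    | mul k1 k2 hk1 hk2 ih1 ih2 =>
      intro g _
      have e : ⁅k1 * k2, g⁆ = (k1 * ⁅k2, g⁆ * k1⁻¹) * ⁅k1, g⁆ := comm_mul_left' g k1 k2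
      have hz := ih2 g (Subgroup.mem_top g)
      have e2 : k1 * ⁅k2, g⁆ * k1⁻¹ = ⁅k2, g⁆ := by
        rw [Subgroup.mem_center_iff.mp hz k1, mul_inv_cancel_right]
      rw [e, e2]
      exact mul_mem hz (ih1 g (Subgroup.mem_top g))
    | inv k hk ih =>
      intro g _
      have e : ⁅k⁻¹, g⁆ = k⁻¹ * ⁅k, g⁆⁻¹ * k := by
        simp only [commutatorElement_def]; group
      have hz : ⁅k, g⁆⁻¹ ∈ Subgroup.center G := inv_mem (ih g (Subgroup.mem_top g))
      rw [e, Subgroup.mem_center_iff.mp hz k⁻¹, inv_mul_cancel_right]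
      exact hz
  -- γ₄ = ⊥
  have h4 : ⁅(⁅(⁅(⊤ : Subgroup G), (⊤ : Subgroup G)⁆ : Subgroup G), (⊤ : Subgroup G)⁆ : Subgroup G), (⊤ : Subgroup G)⁆ = (⊥ : Subgroup G) := by
    rw [eq_bot_iff]
    refine Subgroup.commutator_le.mpr ?_
    intro z hz g _
    rw [Subgroup.mem_bot]
    exact commutatorElement_eq_one_iff_commute.mpr
      ((Subgroup.mem_center_iff.mp (hZ3 hz) g).symm)
  -- commutators commute with each other
  have hKK : ⁅(⁅(⊤ : Subgroup G), (⊤ : Subgroup G)⁆ : Subgroup G), (⁅(⊤ : Subgroup G), (⊤ : Subgroup G)⁆ : Subgroup G)⁆ = (⊥ : Subgroup G) := by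
    apply Subgroup.commutator_commutator_eq_bot_of_rotate
    · rw [Subgroup.commutator_comm (⊤ : Subgroup G) (⁅(⊤ : Subgroup G), (⊤ : Subgroup G)⁆ : Subgroup G)]
      exact h4
    · exact h4
  have cc : ∀ u v s t : G, Commute ⁅u, v⁆ ⁅s, t⁆ := by
    intro u v s t
    apply commutatorElement_eq_one_iff_commute.mp
    have hm : ⁅⁅u, v⁆, ⁅s, t⁆⁆ ∈ ⁅(⁅(⊤ : Subgroup G), (⊤ : Subgroup G)⁆ : Subgroup G), (⁅(⊤ : Subgroup G), (⊤ : Subgroup G)⁆ : Subgroup G)⁆ :=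
      Subgroup.commutator_mem_commutator
        (Subgroup.commutator_mem_commutator (Subgroup.mem_top u) (Subgroup.mem_top v))
        (Subgroup.commutator_mem_commutator (Subgroup.mem_top s) (Subgroup.mem_top t))
    rw [hKK, Subgroup.mem_bot] at hm
    exact hm
  constructor
  · -- Left nucleus → right nucleus
    intro hL
    have P : ∀ u v : G, Commute a ⁅u, v⁆ := by
      intro u v
      have h := (EL_iff a v u⁻¹).mp (hL v u⁻¹)
      rw [inv_inv] at h
      exact commutatorElement_eq_one_iff_commute.mp h
    have Pb : ∀ u v : G, Commute a⁻¹ ⁅u, v⁆ := fun u v => (P u v).inv_left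
    -- the key consequence of `ha`: ⁅a⁻¹,w⁆ * ⁅a⁻¹,w⁆ * w * ⁅a⁻¹,w⁆ = w
    have star : ∀ w : G, ⁅a⁻¹, w⁆ * ⁅a⁻¹, w⁆ * w * ⁅a⁻¹, w⁆ = w := by
      intro w
      have hcom : ⁅a⁻¹, w⁆ * a = a * ⁅a⁻¹, w⁆ := ((P a⁻¹ w).symm).eq
      have e1 : w * a = a * ⁅a⁻¹, w⁆ * w := by
        simp only [commutatorElement_def]; group
      have e2 : (a * w) ^ 3 = a ^ 3 * (⁅a⁻¹, w⁆ * ⁅a⁻¹, w⁆ * w * ⁅a⁻¹, w⁆ * w ^ 2) := by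
        calc (a * w) ^ 3 = a * (w * a) * (w * a) * w := by
              simp only [pow3]; group
        _ = a * (a * ⁅a⁻¹, w⁆ * w) * (a * ⁅a⁻¹, w⁆ * w) * w := by rw [e1]
        _ = a * a * ⁅a⁻¹, w⁆ * (w * a) * ⁅a⁻¹, w⁆ * w * w := by group
        _ = a * a * ⁅a⁻¹, w⁆ * (a * ⁅a⁻¹, w⁆ * w) * ⁅a⁻¹, w⁆ * w * w := by rw [e1]
        _ = a * a * (⁅a⁻¹, w⁆ * a) * ⁅a⁻¹, w⁆ * w * ⁅a⁻¹, w⁆ * w * w := by group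
        _ = a * a * (a * ⁅a⁻¹, w⁆) * ⁅a⁻¹, w⁆ * w * ⁅a⁻¹, w⁆ * w * w := by rw [hcom]
        _ = a ^ 3 * (⁅a⁻¹, w⁆ * ⁅a⁻¹, w⁆ * w * ⁅a⁻¹, w⁆ * w ^ 2) := by
              simp only [pow3, sq]; group
      have e3 : a ^ 3 * (⁅a⁻¹, w⁆ * ⁅a⁻¹, w⁆ * w * ⁅a⁻¹, w⁆ * w ^ 2) = a ^ 3 * w ^ 3 := by
        rw [← e2, ha w]
      have e4 := mul_left_cancel e3
      have e5 : ⁅a⁻¹, w⁆ * ⁅a⁻¹, w⁆ * w * ⁅a⁻¹, w⁆ * w ^ 2 = w * w ^ 2 := by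
        rw [e4]; simp only [pow3, sq]; group
      exact mul_right_cancel e5
    have star3 : ∀ w : G, ⁅a⁻¹, w⁆ ^ 3 * ⁅w, ⁅a⁻¹, w⁆⁆ = 1 := by
      intro w
      calc ⁅a⁻¹, w⁆ ^ 3 * ⁅w, ⁅a⁻¹, w⁆⁆
          = ⁅a⁻¹, w⁆ * (⁅a⁻¹, w⁆ * ⁅a⁻¹, w⁆ * w * ⁅a⁻¹, w⁆) * w⁻¹ * ⁅a⁻¹, w⁆⁻¹ := by
            simp only [pow3]; rw [commutatorElement_def w ⁅a⁻¹, w⁆]; group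
        _ = ⁅a⁻¹, w⁆ * w * w⁻¹ * ⁅a⁻¹, w⁆⁻¹ := by rw [star w]
        _ = 1 := by group
    have kcube_eq : ∀ w : G, ⁅a⁻¹, w⁆ ^ 3 = ⁅w, ⁅a⁻¹, w⁆⁆⁻¹ := fun w =>
      eq_inv_of_mul_eq_one_left (star3 w)
    have kcube_central : ∀ w g : G, Commute (⁅a⁻¹, w⁆ ^ 3) g := by
      intro w g
      rw [kcube_eq w]
      exact (zc' w a⁻¹ w g).inv_left
    have T3 : ∀ u w : G, ⁅u, ⁅a⁻¹, w⁆⁆ ^ 3 = 1 := by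
      intro u w
      have hc : ∀ g, Commute ⁅u, ⁅a⁻¹, w⁆⁆ g := zc' u a⁻¹ w
      have h1 : u * ⁅a⁻¹, w⁆ * u⁻¹ = ⁅u, ⁅a⁻¹, w⁆⁆ * ⁅a⁻¹, w⁆ := conj_comm' u ⁅a⁻¹, w⁆
      have h2 : u * ⁅a⁻¹, w⁆ ^ 3 * u⁻¹ = (u * ⁅a⁻¹, w⁆ * u⁻¹) ^ 3 := by
        simp only [pow3]; group
      rw [h1, (hc ⁅a⁻¹, w⁆).mul_pow] at h2
      have h3 : u * ⁅a⁻¹, w⁆ ^ 3 * u⁻¹ = ⁅a⁻¹, w⁆ ^ 3 := by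
        rw [← (kcube_central w u).eq, mul_inv_cancel_right]
      have h4 : ⁅u, ⁅a⁻¹, w⁆⁆ ^ 3 * ⁅a⁻¹, w⁆ ^ 3 = ⁅a⁻¹, w⁆ ^ 3 := h2.symm.trans h3
      exact mul_eq_right.mp h4
    intro x y
    rw [ER_iff]
    -- notation: kx = ⁅a⁻¹,x⁆, ky = ⁅a⁻¹,y⁆, c = ⁅x,ky⁆, c' = ⁅y,kx⁆
    have hc : ∀ t, Commute ⁅x, ⁅a⁻¹, y⁆⁆ t := zc' x a⁻¹ y
    have hc' : ∀ t, Commute ⁅y, ⁅a⁻¹, x⁆⁆ t := zc' y a⁻¹ x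
    have hp : ∀ t, Commute ⁅x, ⁅a⁻¹, x⁆⁆ t := zc' x a⁻¹ x
    have hq : ∀ t, Commute ⁅y, ⁅a⁻¹, y⁆⁆ t := zc' y a⁻¹ y
    have exy : ⁅a⁻¹, x * y⁆ = ⁅x, ⁅a⁻¹, y⁆⁆ * (⁅a⁻¹, x⁆ * ⁅a⁻¹, y⁆) := by
      rw [comm_mul_right' a⁻¹ x y, conj_comm' x ⁅a⁻¹, y⁆, ← mul_assoc,
        ← (hc ⁅a⁻¹, x⁆).eq, mul_assoc]
    have eyx : ⁅a⁻¹, y * x⁆ = ⁅y, ⁅a⁻¹, x⁆⁆ * (⁅a⁻¹, x⁆ * ⁅a⁻¹, y⁆) := by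
      rw [comm_mul_right' a⁻¹ y x, conj_comm' y ⁅a⁻¹, x⁆, ← mul_assoc,
        ← (hc' ⁅a⁻¹, y⁆).eq, mul_assoc, (cc a⁻¹ y a⁻¹ x).eq]
    have swap : ⁅a⁻¹, x * y⁆ = ⁅a⁻¹, y * x⁆ := by
      have d1 : x * y = ⁅x, y⁆ * (y * x) := by
        simp only [commutatorElement_def]; group
      rw [d1, comm_mul_right' a⁻¹ ⁅x, y⁆ (y * x),
        commutatorElement_eq_one_iff_commute.mpr (Pb x y), one_mul,
        (cc x y a⁻¹ (y * x)).eq, mul_inv_cancel_right]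
    have ceq : ⁅x, ⁅a⁻¹, y⁆⁆ = ⁅y, ⁅a⁻¹, x⁆⁆ :=
      mul_right_cancel (exy.symm.trans (swap.trans eyx))
    -- star at x*y and cancellation
    have hK := star3 (x * y)
    rw [exy, comm_absorb (x * y) _ _ hc,
      comm_mul_right_c (x * y) _ _ (fun t => zc' (x * y) a⁻¹ y t),
      comm_mul_left_c ⁅a⁻¹, x⁆ x y hc',
      comm_mul_left_c ⁅a⁻¹, y⁆ x y hq,
      (hc (⁅a⁻¹, x⁆ * ⁅a⁻¹, y⁆)).mul_pow, T3 x y, one_mul,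
      (cc a⁻¹ x a⁻¹ y).mul_pow, kcube_eq x, kcube_eq y] at hK
    -- hK : ⁅x,kx⁆⁻¹ * ⁅y,ky⁆⁻¹ * (⁅y,kx⁆ * ⁅x,kx⁆ * (⁅y,ky⁆ * ⁅x,ky⁆)) = 1
    have hshuffle : ⁅x, ⁅a⁻¹, x⁆⁆⁻¹ * ⁅y, ⁅a⁻¹, y⁆⁆⁻¹ *
        (⁅y, ⁅a⁻¹, x⁆⁆ * ⁅x, ⁅a⁻¹, x⁆⁆ * (⁅y, ⁅a⁻¹, y⁆⁆ * ⁅x, ⁅a⁻¹, y⁆⁆))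
          = ⁅y, ⁅a⁻¹, x⁆⁆ * ⁅x, ⁅a⁻¹, y⁆⁆ := by
      rw [(hc' ⁅x, ⁅a⁻¹, x⁆⁆).eq]
      rw [show ⁅x, ⁅a⁻¹, x⁆⁆⁻¹ * ⁅y, ⁅a⁻¹, y⁆⁆⁻¹ *
          (⁅x, ⁅a⁻¹, x⁆⁆ * ⁅y, ⁅a⁻¹, x⁆⁆ * (⁅y, ⁅a⁻¹, y⁆⁆ * ⁅x, ⁅a⁻¹, y⁆⁆))
          = ⁅x, ⁅a⁻¹, x⁆⁆⁻¹ * ((⁅y, ⁅a⁻¹, y⁆⁆⁻¹ * ⁅x, ⁅a⁻¹, x⁆⁆) *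
            ((⁅y, ⁅a⁻¹, x⁆⁆ * ⁅y, ⁅a⁻¹, y⁆⁆) * ⁅x, ⁅a⁻¹, y⁆⁆)) from by group]
      rw [(hq ⁅x, ⁅a⁻¹, x⁆⁆).inv_left.eq, (hc' ⁅y, ⁅a⁻¹, y⁆⁆).eq]
      group
    have key : ⁅y, ⁅a⁻¹, x⁆⁆ * ⁅x, ⁅a⁻¹, y⁆⁆ = 1 := hshuffle.symm.trans hK
    rw [← ceq] at key
    have c3 := T3 x y
    have csq : ⁅x, ⁅a⁻¹, y⁆⁆ ^ 3 = ⁅x, ⁅a⁻¹, y⁆⁆ := by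
      rw [pow3, key, one_mul]
    have c1 : ⁅x, ⁅a⁻¹, y⁆⁆ = 1 := csq.symm.trans c3
    have h4' : Commute x ⁅a⁻¹, y⁆⁻¹ :=
      (commutatorElement_eq_one_iff_commute.mp c1).inv_right
    rw [commutatorElement_inv] at h4'
    exact commutatorElement_eq_one_iff_commute.mpr h4'
  · -- Right nucleus → left nucleus
    intro hR x y
    rw [EL_iff]
    have Qc : ∀ v g : G, Commute ⁅a⁻¹, v⁆ g := by
      intro v g
      have h := (ER_iff a g v).mp (hR g v)
      have h2 : Commute ⁅v, a⁻¹⁆⁻¹ g :=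
        ((commutatorElement_eq_one_iff_commute.mp h).symm).inv_left
      rw [commutatorElement_inv] at h2
      exact h2
    have khom : ∀ u v : G, ⁅a⁻¹, u * v⁆ = ⁅a⁻¹, u⁆ * ⁅a⁻¹, v⁆ :=
      fun u v => comm_mul_right_c a⁻¹ u v (Qc v)
    have kinv : ∀ u : G, ⁅a⁻¹, u⁻¹⁆ = ⁅a⁻¹, u⁆⁻¹ :=
      fun u => comm_inv_right_c a⁻¹ u (Qc u)
    have h1 : ⁅a⁻¹, ⁅y⁻¹, x⁆⁆ = 1 := by
      have hcomm : ⁅⁅a⁻¹, y⁻¹⁆, ⁅a⁻¹, x⁆⁆ = 1 :=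
        commutatorElement_eq_one_iff_commute.mpr (Qc y⁻¹ ⁅a⁻¹, x⁆)
      rw [commutatorElement_def ⁅a⁻¹, y⁻¹⁆ ⁅a⁻¹, x⁆] at hcomm
      rw [commutatorElement_def y⁻¹ x, khom, khom, khom, kinv y⁻¹, kinv x]
      exact hcomm
    have h2 : Commute a⁻¹ ⁅y⁻¹, x⁆ := commutatorElement_eq_one_iff_commute.mp h1
    have h3' : Commute a⁻¹⁻¹ ⁅y⁻¹, x⁆ := h2.inv_left
    rw [inv_inv] at h3'
    exact commutatorElement_eq_one_iff_commute.mpr h3'
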